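/- arXiv:1309.1330 — 2 statements merged into one kernel-verified Lean document; each statement's English description precedes it below -/
import Mathlib

section
/- Let f : ℝ² → ℝ be continuous and compactly supported. Then the elastic collision operator is non-positive on L²(ℝ²): ∫_{ℝ²} Q_el(f)(k) f(k) dk ≤ 0. -/
open MeasureTheory Real

noncomputable section

/-- The point on the unit circle `S¹ ⊂ ℝ²` at angle `θ`. -/
def circ (θ : ℝ) : EuclideanSpace ℝ (Fin 2) :=
  (WithLp.equiv 2 (Fin 2 → ℝ)).symm ![Real.cos θ, Real.sin θ]

/-- Integral over the unit circle `S¹ ⊂ ℝ²` with respect to arclength measure,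
parametrized by the angle. -/
def sphereIntegral (g : EuclideanSpace ℝ (Fin 2) → ℝ) : ℝ :=
  ∫ θ in (0:ℝ)..(2 * Real.pi), g (circ θ)

/-- The elastic collision operator (parabolic band, unit scattering matrix):
`Q_el(f)(k) = ∫_{S¹} f(|k| σ) dσ − 2π f(k)`. -/
def Qel (f : EuclideanSpace ℝ (Fin 2) → ℝ) (k : EuclideanSpace ℝ (Fin 2)) : ℝ :=
  sphereIntegral (fun σ => f (‖k‖ • σ)) - 2 * Real.pi * f k

open Set

lemma circ_cont : Continuous circ := by
  apply (PiLp.continuous_toLp 2 (fun _ : Fin 2 => ℝ)).comp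
  refine continuous_pi fun i => ?_
  fin_cases i <;> simp <;> fun_prop

lemma circ_periodic : Function.Periodic circ (2 * π) := by
  intro θ; simp [circ]

lemma norm_smul_circ (r θ : ℝ) (hr : 0 ≤ r) : ‖r • circ θ‖ = r := by
  have h1 : ‖circ θ‖ = 1 := by simp [circ, EuclideanSpace.norm_eq, Fin.sum_univ_two]
  rw [norm_smul, h1, mul_one, Real.norm_eq_abs, abs_of_nonneg hr]

/-- Measurable equivalence `ℝ × ℝ ≃ ℝ²`. -/
def toE : ℝ × ℝ ≃ᵐ EuclideanSpace ℝ (Fin 2) :=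
  (MeasurableEquiv.finTwoArrow).symm.trans (MeasurableEquiv.toLp 2 (Fin 2 → ℝ)).symm.symm

lemma toE_mp : MeasurePreserving toE :=
  ((EuclideanSpace.volume_preserving_symm_measurableEquiv_toLp (Fin 2)).symm).comp
    (volume_preserving_finTwoArrow ℝ).symm

lemma toE_polar (r θ : ℝ) : toE (polarCoord.symm (r, θ)) = r • circ θ := by
  ext i
  fin_cases i <;>
    simp [toE, circ, polarCoord, MeasurableEquiv.finTwoArrow, MeasurableEquiv.coe_toLp]

/-- Integrability of the polar-coordinates integrand. -/
lemma integrableOn_polar {F : ℝ × ℝ → ℝ} (hF : Integrable F) :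
    IntegrableOn (fun p : ℝ × ℝ => p.1 • F (polarCoord.symm p)) polarCoord.target := by
  set B : ℝ × ℝ → ℝ × ℝ →L[ℝ] ℝ × ℝ := fun p =>
    LinearMap.toContinuousLinearMap (Matrix.toLin (Module.Basis.finTwoProd ℝ) (Module.Basis.finTwoProd ℝ)
      !![cos p.2, -p.1 * sin p.2; sin p.2, p.1 * cos p.2]) with hB
  have B_det : ∀ p, (B p).det = p.1 := by
    intro p
    conv_rhs => rw [← one_mul p.1, ← cos_sq_add_sin_sq p.2]
    simp only [hB, neg_mul, LinearMap.det_toContinuousLinearMap, LinearMap.det_toLin,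
      Matrix.det_fin_two_of, sub_neg_eq_add]
    ring
  have h1 : IntegrableOn F (polarCoord.symm '' polarCoord.target) :=
    hF.integrableOn
  have h2 := (integrableOn_image_iff_integrableOn_abs_det_fderiv_smul volume
    polarCoord.open_target.measurableSet
    (fun p _ => (hasFDerivAt_polarCoord_symm p).hasFDerivWithinAt)
    polarCoord.symm.injOn F).mp h1
  refine h2.congr_fun (fun p hp => ?_) polarCoord.open_target.measurableSet
  show |(B p).det| • F (polarCoord.symm p) = _
  rw [B_det, abs_of_pos hp.1]

/-- Cauchy–Schwarz on the interval `Ioo (-π) π`. -/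
lemma cs_Ioo {g : ℝ → ℝ} (hg : IntegrableOn g (Ioo (-π) π))
    (hg2 : IntegrableOn (fun θ => g θ ^ 2) (Ioo (-π) π)) :
    (∫ θ in Ioo (-π) π, g θ) ^ 2 ≤ 2 * π * ∫ θ in Ioo (-π) π, g θ ^ 2 := by
  set I1 := ∫ θ in Ioo (-π) π, g θ with hI1
  set I2 := ∫ θ in Ioo (-π) π, g θ ^ 2 with hI2
  have h0 : (0:ℝ) ≤ ∫ θ in Ioo (-π) π, (2 * π * g θ - I1) ^ 2 :=
    integral_nonneg fun θ => sq_nonneg _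
  have hmeas : (volume (Ioo (-π) π)).toReal = 2 * π := by
    rw [Real.volume_Ioo, ENNReal.toReal_ofReal (by linarith [pi_pos])]
    ring
  have hexp : ∫ θ in Ioo (-π) π, (2 * π * g θ - I1) ^ 2
      = (2 * π) ^ 2 * I2 - (2 * (2 * π) * I1) * I1 + I1 ^ 2 * (2 * π) := by
    have heq : ∀ θ, (2 * π * g θ - I1) ^ 2
        = (2 * π) ^ 2 * g θ ^ 2 - (2 * (2 * π) * I1) * g θ + I1 ^ 2 := by
      intro θ; ring
    have ha : IntegrableOn
        (fun θ => (2 * π) ^ 2 * g θ ^ 2 - (2 * (2 * π) * I1) * g θ) (Ioo (-π) π) :=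
      (hg2.const_mul ((2 * π) ^ 2)).sub (hg.const_mul (2 * (2 * π) * I1))
    have hb : IntegrableOn (fun _ : ℝ => (I1 ^ 2 : ℝ)) (Ioo (-π) π) := by
      apply integrableOn_const (by rw [Real.volume_Ioo]; exact ENNReal.ofReal_ne_top)
    calc ∫ θ in Ioo (-π) π, (2 * π * g θ - I1) ^ 2
        = ∫ θ in Ioo (-π) π,
            (((2 * π) ^ 2 * g θ ^ 2 - (2 * (2 * π) * I1) * g θ) + I1 ^ 2) := by
          simp_rw [heq]
      _ = (∫ θ in Ioo (-π) π, ((2 * π) ^ 2 * g θ ^ 2 - (2 * (2 * π) * I1) * g θ))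
            + ∫ θ in Ioo (-π) π, (I1 ^ 2 : ℝ) := integral_add ha hb
      _ = (2 * π) ^ 2 * I2 - (2 * (2 * π) * I1) * I1 + I1 ^ 2 * (2 * π) := by
          rw [integral_sub (hg2.const_mul _) (hg.const_mul _), integral_const_mul,
            integral_const_mul, setIntegral_const, smul_eq_mul, measureReal_def, hmeas]
          ring
  rw [hexp] at h0
  nlinarith [pi_pos]

set_option maxHeartbeats 1000000 in
/-- The elastic collision operator is non-positive on `L²(ℝ²)`. -/
theorem stmt_4 (f : EuclideanSpace ℝ (Fin 2) → ℝ)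
    (hf : Continuous f) (hfc : HasCompactSupport f) :
    ∫ k, Qel f k * f k ≤ 0 := by
  set F : EuclideanSpace ℝ (Fin 2) → ℝ := fun k => Qel f k * f k with hFdef
  -- Integrability of F
  have hG : Continuous (fun r : ℝ => ∫ θ in (0:ℝ)..(2 * π), f (r • circ θ)) := by
    apply intervalIntegral.continuous_parametric_intervalIntegral_of_continuous'
    exact hf.comp (continuous_fst.smul (circ_cont.comp continuous_snd))
  have hQ : Continuous (Qel f) := by
    have : Qel f = fun k => (fun r : ℝ => ∫ θ in (0:ℝ)..(2 * π), f (r • circ θ)) ‖k‖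
        - 2 * π * f k := rfl
    rw [this]
    exact (hG.comp continuous_norm).sub (continuous_const.mul hf)
  have hFint : Integrable F := (hQ.mul hf).integrable_of_hasCompactSupport hfc.mul_left
  -- change of variables to polar coordinates
  have step1 : ∫ k, F k = ∫ p : ℝ × ℝ, F (toE p) :=
    (toE_mp.integral_comp toE.measurableEmbedding F).symm
  have step2 : ∫ p : ℝ × ℝ, F (toE p)
      = ∫ p in polarCoord.target, p.1 • (F (toE (polarCoord.symm p))) :=
    (integral_comp_polarCoord_symm (fun p => F (toE p))).symm
  have hFtoE : Integrable (fun p : ℝ × ℝ => F (toE p)) :=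
    (toE_mp.integrable_comp_emb toE.measurableEmbedding).2 hFint
  have hIntOn : IntegrableOn (fun p : ℝ × ℝ => p.1 • F (toE (polarCoord.symm p)))
      polarCoord.target := integrableOn_polar (F := fun p => F (toE p)) hFtoE
  have htarget : polarCoord.target = Ioi (0:ℝ) ×ˢ Ioo (-π) π := rfl
  rw [step1, step2, htarget]
  rw [htarget] at hIntOn
  rw [Measure.volume_eq_prod ℝ ℝ] at hIntOn ⊢
  rw [setIntegral_prod _ hIntOn]
  -- the angular integral is nonpositive for each r > 0
  refine setIntegral_nonpos measurableSet_Ioi fun r hr => ?_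
  have hr0 : (0:ℝ) < r := hr
  set g : ℝ → ℝ := fun θ => f (r • circ θ) with hgdef
  have hgc : Continuous g := hf.comp (circ_cont.const_smul r)
  have hgint : IntegrableOn g (Ioo (-π) π) :=
    (hgc.integrableOn_Icc).mono_set Ioo_subset_Icc_self
  have hg2int : IntegrableOn (fun θ => g θ ^ 2) (Ioo (-π) π) :=
    ((hgc.pow 2).integrableOn_Icc).mono_set Ioo_subset_Icc_self
  set I1 := ∫ θ in Ioo (-π) π, g θ with hI1
  set I2 := ∫ θ in Ioo (-π) π, g θ ^ 2 with hI2
  -- the sphere integral equals I1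
  have hper : Function.Periodic g (2 * π) := fun θ => by
    simp only [hgdef]; rw [circ_periodic θ]
  have hS : sphereIntegral (fun σ => f (r • σ)) = I1 := by
    have h1 : sphereIntegral (fun σ => f (r • σ)) = ∫ θ in (0:ℝ)..(0 + 2 * π), g θ := by
      simp [sphereIntegral, hgdef]
    have h2 := hper.intervalIntegral_add_eq 0 (-π)
    have h3 : -π + 2 * π = π := by ring
    rw [h1, h2, h3, intervalIntegral.integral_of_le (by linarith [pi_pos]),
      MeasureTheory.integral_Ioc_eq_integral_Ioo]
  -- rewrite the integrand
  have hcongr : ∫ θ in Ioo (-π) π, (r, θ).1 • F (toE (polarCoord.symm ((r, θ).1, θ)))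
      = ∫ θ in Ioo (-π) π, (r * (I1 * g θ) - r * (2 * π * g θ ^ 2)) := by
    refine setIntegral_congr_fun measurableSet_Ioo fun θ _ => ?_
    have hk : toE (polarCoord.symm (r, θ)) = r • circ θ := toE_polar r θ
    have hnorm : ‖r • circ θ‖ = r := norm_smul_circ r θ hr0.le
    simp only [hk, hFdef, Qel, hnorm, smul_eq_mul]
    rw [hS]
    simp only [hgdef]
    ring
  calc ∫ θ in Ioo (-π) π, (r, θ).1 • F (toE (polarCoord.symm ((r, θ).1, θ)))
      = ∫ θ in Ioo (-π) π, (r * (I1 * g θ) - r * (2 * π * g θ ^ 2)) := hcongr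
    _ = r * (I1 * I1) - r * (2 * π * I2) := by
        have hc1 : IntegrableOn (fun θ => r * (I1 * g θ)) (Ioo (-π) π) :=
          (hgint.const_mul I1).const_mul r
        have hc2 : IntegrableOn (fun θ => r * (2 * π * g θ ^ 2)) (Ioo (-π) π) :=
          (hg2int.const_mul (2 * π)).const_mul r
        rw [integral_sub hc1 hc2, integral_const_mul, integral_const_mul, integral_const_mul,
          integral_const_mul]
    _ ≤ 0 := by
        have hcs : I1 ^ 2 ≤ 2 * π * I2 := cs_Ioo hgint hg2int
        nlinarith
end
end

section
/- Let X be a real normed vector space, M ∈ X, and let Δt > 0, α > 0 and β > 1/2. Suppose the sequence (fⁿ)_{n≥0} in X satisfies the implicit BGK-penalized scheme (f^{n+1} − fⁿ)/Δt = ((1−β)/α)(M − fⁿ) + (β/α)(M − f^{n+1}) for all n ≥ 0. Then, with r = (1 + (Δt/α)(β−1)) / (1 + (Δt/α)β), one has f^{n+1} − M = r (fⁿ − M) for all n, hence fⁿ − M = rⁿ (f⁰ − M); moreover |r| < 1, so ‖fⁿ − M‖ = |r|ⁿ ‖f⁰ − M‖ → 0 as n → ∞, i.e., fⁿ converges geometrically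 to M. -/
open Filter

/-- Geometric convergence to equilibrium of the implicit BGK-penalized IMEX scheme
`(f^{n+1} − fⁿ)/Δt = ((1−β)/α)(M − fⁿ) + (β/α)(M − f^{n+1})` for `β > 1/2`. -/
theorem stmt_18 {X : Type*} [NormedAddCommGroup X] [NormedSpace ℝ X]
    (M : X) (Δt α β : ℝ) (hΔt : 0 < Δt) (hα : 0 < α) (hβ : 1/2 < β)
    (f : ℕ → X)
    (hscheme : ∀ n : ℕ,
      Δt⁻¹ • (f (n+1) - f n) = ((1 - β)/α) • (M - f n) + (β/α) • (M - f (n+1)))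
    (r : ℝ) (hr : r = (1 + (Δt/α) * (β - 1)) / (1 + (Δt/α) * β)) :
    (∀ n : ℕ, f (n+1) - M = r • (f n - M)) ∧
      (∀ n : ℕ, f n - M = r ^ n • (f 0 - M)) ∧
      |r| < 1 ∧
      (∀ n : ℕ, ‖f n - M‖ = |r| ^ n * ‖f 0 - M‖) ∧
      Tendsto (fun n : ℕ => ‖f n - M‖) atTop (nhds 0) := by
  have ht : 0 < Δt / α := div_pos hΔt hα
  have hden : (0:ℝ) < 1 + (Δt/α) * β := by nlinarith
  have h1 : ∀ n : ℕ, f (n+1) - M = r • (f n - M) := by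
    intro n
    have H := hscheme n
    have H2 : f (n+1) - f n = (Δt*(1-β)/α) • (M - f n) + (Δt*β/α) • (M - f (n+1)) := by
      calc f (n+1) - f n = Δt • Δt⁻¹ • (f (n+1) - f n) := by
            rw [smul_smul, mul_inv_cancel₀ hΔt.ne', one_smul]
        _ = _ := by rw [H]; module
    have key : (1 + (Δt/α) * β) • (f (n+1) - M) = (1 + (Δt/α) * (β-1)) • (f n - M) := by
      linear_combination (norm := module) H2
    rw [hr, div_eq_inv_mul, ← smul_smul, ← key, smul_smul, inv_mul_cancel₀ hden.ne',
      one_smul]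
  have h2 : ∀ n : ℕ, f n - M = r ^ n • (f 0 - M) := by
    intro n
    induction n with
    | zero => simp
    | succ n ih => rw [h1 n, ih, smul_smul, ← pow_succ']
  have h3 : |r| < 1 := by
    rw [abs_lt, hr]
    constructor
    · rw [lt_div_iff₀ hden]; nlinarith
    · rw [div_lt_one hden]; nlinarith
  have h4 : ∀ n : ℕ, ‖f n - M‖ = |r| ^ n * ‖f 0 - M‖ := by
    intro n
    rw [h2 n, norm_smul, norm_pow, Real.norm_eq_abs]
  refine ⟨h1, h2, h3, h4, ?_⟩
  have := (tendsto_pow_atTop_nhds_zero_of_lt_one (abs_nonneg r) h3).mul_const ‖f 0 - M‖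
  rw [zero_mul] at this
  exact this.congr fun n => (h4 n).symm
end
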